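/- Let n be an even integer with n ≥ 2 and n ≠ 4, and let p ≥ 7 be a prime with p ≡ 1 (mod n) but p ≢ 1 (mod 2n). Then ∑_{k=0}^{(p-1)/n} (1/n)_k^4 · ((2n-3)/(2n))_k / ( (5/(2n))_k · (k!)^4 ) ≡ 0 (mod p) in ℤ_p. -/

import Mathlib

open Finset

/-- Rising factorial in an arbitrary commutative ring. -/
def rrg {R : Type*} [CommRing R] (a : R) (k : ℕ) : R :=
  ∏ j ∈ Finset.range k, (a + (j : R))

@[simp] lemma rrg_zero {R : Type*} [CommRing R] (a : R) : rrg a 0 = 1 := by simp [rrg]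

lemma map_rrg {R S : Type*} [CommRing R] [CommRing S] (f : R →+* S) (a : R) (k : ℕ) :
    f (rrg a k) = rrg (f a) k := by
  simp [rrg, map_prod]

lemma rrg_ne_zero {F : Type*} [Field F] {a : F} {k : ℕ} (h : ∀ j < k, a + (j : F) ≠ 0) :
    rrg a k ≠ 0 :=
  Finset.prod_ne_zero_iff.2 fun j hj => h j (Finset.mem_range.1 hj)

lemma prod_neg_eq {F : Type*} [CommRing F] (f : ℕ → F) (k : ℕ) :
    ∏ j ∈ Finset.range k, (-(f j)) = (-1) ^ k * ∏ j ∈ Finset.range k, f j := by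
  calc ∏ j ∈ Finset.range k, (-(f j)) = ∏ j ∈ Finset.range k, ((-1) * f j) :=
        Finset.prod_congr rfl fun j _ => by ring
    _ = (∏ _j ∈ Finset.range k, (-1 : F)) * ∏ j ∈ Finset.range k, f j :=
        Finset.prod_mul_distrib
    _ = (-1) ^ k * ∏ j ∈ Finset.range k, f j := by simp

lemma prod_one_add_cast {F : Type*} [CommRing F] (k : ℕ) :
    ∏ j ∈ Finset.range k, ((1 : F) + (j : F)) = (k.factorial : F) := by
  rw [← Finset.prod_range_add_one_eq_factorial k, Nat.cast_prod]
  exact Finset.prod_congr rfl fun j _ => by push_cast; ring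

lemma rrg_rev {R : Type*} [CommRing R] (a : R) {m k : ℕ} (hk : k ≤ m) :
    rrg a m = rrg a (m - k) * ∏ j ∈ Finset.range k, (a + (m : R) - 1 - (j : R)) := by
  have h : m - k + k = m := Nat.sub_add_cancel hk
  calc rrg a m = rrg a (m - k + k) := by rw [h]
    _ = rrg a (m - k) * ∏ i ∈ Finset.range k, (a + ((m - k + i : ℕ) : R)) := by
        simp [rrg, Finset.prod_range_add]
    _ = rrg a (m - k) * ∏ j ∈ Finset.range k, (a + ((m - k + (k - 1 - j) : ℕ) : R)) := by
        rw [Finset.prod_range_reflect (fun i => a + ((m - k + i : ℕ) : R)) k]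
    _ = _ := by
        congr 1
        refine Finset.prod_congr rfl fun j hj => ?_
        have hj' : j < k := Finset.mem_range.1 hj
        have h1 : m - k + (k - 1 - j) = m - (1 + j) := by omega
        have h2 : 1 + j ≤ m := by omega
        rw [h1, Nat.cast_sub h2]
        push_cast
        ring


section zmodside
variable {p n m : ℕ} [hpf : Fact p.Prime]

lemma basic_facts (hp : 7 ≤ p) (hn2 : 2 ≤ n) (hm : n * m = p - 1) :
    (n : ZMod p) ≠ 0 ∧ (2 : ZMod p) ≠ 0 ∧ m < p ∧ 1 ≤ m := by
  have hm1 : 1 ≤ m := by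
    rcases Nat.eq_zero_or_pos m with h | h
    · subst h; omega
    · exact h
  have hnp : n < p := by
    have : n * 1 ≤ n * m := Nat.mul_le_mul_left n hm1
    omega
  refine ⟨?_, ?_, ?_, hm1⟩
  · intro h
    have := (ZMod.natCast_eq_zero_iff n p).1 h
    have := Nat.le_of_dvd (by omega) this
    omega
  · intro h
    have h' : ((2 : ℕ) : ZMod p) = 0 := by exact_mod_cast h
    have := (ZMod.natCast_eq_zero_iff 2 p).1 h'
    have := Nat.le_of_dvd (by omega) this
    omega
  · have : 1 * m ≤ n * m := Nat.mul_le_mul_right m (by omega)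
    omega

lemma gamma_ne (hp : 7 ≤ p) (hn2 : 2 ≤ n) (hneven : Even n) (hn4 : n ≠ 4)
    (hm : n * m = p - 1) (hpn : p % n = 1) (hpn2 : ¬ p % (2 * n) = 1) :
    ∀ j < m, (5 / (2 * (n : ZMod p)) + (j : ZMod p)) ≠ 0 := by
  obtain ⟨hn0, h20, hmp, hm1⟩ := basic_facts hp hn2 hm
  intro j hj h
  have h2n : (2 * (n : ZMod p)) ≠ 0 := mul_ne_zero h20 hn0
  have key : (5 : ZMod p) + 2 * (n : ZMod p) * (j : ZMod p)
      = (5 / (2 * (n : ZMod p)) + (j : ZMod p)) * (2 * (n : ZMod p)) := by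
    field_simp
  rw [h, zero_mul] at key
  have h5 : ((5 + 2 * (n * j) : ℕ) : ZMod p) = 0 := by push_cast; linear_combination key
  have hdvd : p ∣ 5 + 2 * (n * j) := (ZMod.natCast_eq_zero_iff _ p).1 h5
  have hbound : n * j + n ≤ p - 1 := by
    have h' := Nat.mul_le_mul_left n (show j + 1 ≤ m by omega)
    rw [Nat.mul_succ, hm] at h'
    exact h'
  obtain ⟨q, hq⟩ : ∃ q, q = n * j := ⟨_, rfl⟩
  rw [← hq] at hdvd hbound
  obtain ⟨t, ht⟩ := hdvd
  have hple : p = 5 + 2 * q := by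
    rcases t with _ | _ | t
    · omega
    · omega
    · exfalso
      obtain ⟨w, hw⟩ : ∃ w, w = p * t := ⟨_, rfl⟩
      have hx : p * (t + 1 + 1) = w + p * 2 := by rw [hw]; ring
      omega
  -- now n ∣ 4
  have hd1 : n ∣ p - 1 := ⟨m, hm.symm⟩
  have hd2 : n ∣ 2 * q := ⟨2 * j, by rw [hq]; ring⟩
  have hd3 : n ∣ (p - 1) - 2 * q := Nat.dvd_sub hd1 hd2
  have hd4 : (p - 1) - 2 * q = 4 := by omega
  rw [hd4] at hd3
  have hn2' : n = 2 := by
    have hle := Nat.le_of_dvd (by norm_num) hd3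
    interval_cases n
    · rfl
    · exfalso; revert hd3; decide
    · exact absurd rfl hn4
  subst hn2'
  have hq2 : q = 2 * j := by omega
  exact hpn2 (by omega)

lemma beta_ne (hp : 7 ≤ p) (hn2 : 2 ≤ n) (hneven : Even n) (hn4 : n ≠ 4)
    (hm : n * m = p - 1) (hpn : p % n = 1) (hpn2 : ¬ p % (2 * n) = 1) :
    ∀ j < m, ((2 * (n : ZMod p) - 3) / (2 * (n : ZMod p)) + (j : ZMod p)) ≠ 0 := by
  obtain ⟨hn0, h20, hmp, hm1⟩ := basic_facts hp hn2 hm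
  intro j hj h
  have h2n : (2 * (n : ZMod p)) ≠ 0 := mul_ne_zero h20 hn0
  have key : (2 * (n : ZMod p) - 3) + 2 * (n : ZMod p) * (j : ZMod p)
      = ((2 * (n : ZMod p) - 3) / (2 * (n : ZMod p)) + (j : ZMod p)) * (2 * (n : ZMod p)) := by
    field_simp
  rw [h, zero_mul] at key
  have h3 : ((2 * n + 2 * (n * j) : ℕ) : ZMod p) = ((3 : ℕ) : ZMod p) := by
    push_cast; linear_combination key
  have hmeq : (2 * n + 2 * (n * j)) % p = 3 % p := (ZMod.natCast_eq_natCast_iff _ _ _).1 h3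
  rw [Nat.mod_eq_of_lt (by omega : (3:ℕ) < p)] at hmeq
  have hbound : n * j + n ≤ p - 1 := by
    have h' := Nat.mul_le_mul_left n (show j + 1 ≤ m by omega)
    rw [Nat.mul_succ, hm] at h'
    exact h'
  obtain ⟨q, hq⟩ : ∃ q, q = n * j := ⟨_, rfl⟩
  rw [← hq] at hmeq hbound
  obtain ⟨d, hd⟩ : ∃ d, d = (2 * n + 2 * q) / p := ⟨_, rfl⟩
  have hdm := Nat.div_add_mod (2 * n + 2 * q) p
  rw [← hd, hmeq] at hdm
  have heq : 2 * n + 2 * q = p + 3 := by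
    rcases d with _ | _ | d
    · omega
    · omega
    · exfalso
      obtain ⟨w, hw⟩ : ∃ w, w = p * d := ⟨_, rfl⟩
      have hx : p * (d + 1 + 1) = w + p * 2 := by rw [hw]; ring
      omega
  have hd1 : n ∣ p - 1 := ⟨m, hm.symm⟩
  have hd2 : n ∣ 2 * n + 2 * q := ⟨2 + 2 * j, by rw [hq]; ring⟩
  have hd3 : n ∣ (2 * n + 2 * q) - (p - 1) := Nat.dvd_sub hd2 hd1
  have hd4 : (2 * n + 2 * q) - (p - 1) = 4 := by omega
  rw [hd4] at hd3
  have hn2' : n = 2 := by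
    have hle := Nat.le_of_dvd (by norm_num) hd3
    interval_cases n
    · rfl
    · exfalso; revert hd3; decide
    · exact absurd rfl hn4
  subst hn2'
  have hq2 : q = 2 * j := by omega
  exact hpn2 (by omega)

lemma nm_neg_one (hp : 7 ≤ p) (hm : n * m = p - 1) :
    (n : ZMod p) * (m : ZMod p) = -1 := by
  have hcast : ((n * m : ℕ) : ZMod p) = ((p - 1 : ℕ) : ZMod p) := by rw [hm]
  rwa [Nat.cast_mul, Nat.cast_sub (by omega : 1 ≤ p), ZMod.natCast_self, Nat.cast_one,
    zero_sub] at hcast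

lemma inv_n_eq (hp : 7 ≤ p) (hn2 : 2 ≤ n) (hm : n * m = p - 1) :
    (n : ZMod p)⁻¹ = -(m : ZMod p) := by
  have h1 : (n : ZMod p) * (-(m : ZMod p)) = 1 := by linear_combination -(nm_neg_one hp hm)
  exact (eq_inv_of_mul_eq_one_right h1).symm

lemma alpha_ne (hp : 7 ≤ p) (hn2 : 2 ≤ n) (hm : n * m = p - 1) :
    ∀ j < m, ((n : ZMod p)⁻¹ + (j : ZMod p)) ≠ 0 := by
  obtain ⟨hn0, h20, hmp, hm1⟩ := basic_facts hp hn2 hm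
  intro j hj h
  rw [inv_n_eq hp hn2 hm] at h
  have h2 : ((j : ℕ) : ZMod p) = ((m : ℕ) : ZMod p) := by linear_combination h
  have h3 : j % p = m % p := (ZMod.natCast_eq_natCast_iff _ _ _).1 h2
  rw [Nat.mod_eq_of_lt (by omega), Nat.mod_eq_of_lt hmp] at h3
  omega

lemma fact_ne (hp : 7 ≤ p) (hn2 : 2 ≤ n) (hm : n * m = p - 1) :
    ∀ k ≤ m, ((k.factorial : ZMod p)) ≠ 0 := by
  obtain ⟨hn0, h20, hmp, hm1⟩ := basic_facts hp hn2 hm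
  intro k hk h
  have h1 := (ZMod.natCast_eq_zero_iff _ p).1 h
  have h2 := (Nat.Prime.dvd_factorial hpf.out).1 h1
  omega


lemma zmod_sum (hp : 7 ≤ p) (hn2 : 2 ≤ n) (hneven : Even n) (hn4 : n ≠ 4)
    (hm : n * m = p - 1) (hpn : p % n = 1) (hpn2 : ¬ p % (2 * n) = 1) (hmodd : Odd m) :
    ∑ k ∈ Finset.range (m + 1),
      rrg ((n : ZMod p)⁻¹) k ^ 4 * rrg ((2 * (n : ZMod p) - 3) / (2 * (n : ZMod p))) k /
        (rrg ((5 : ZMod p) / (2 * (n : ZMod p))) k * (k.factorial : ZMod p) ^ 4) = 0 := by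
  obtain ⟨hn0, h20, hmp, hm1⟩ := basic_facts hp hn2 hm
  have hA := alpha_ne hp hn2 hm
  have hB := beta_ne hp hn2 hneven hn4 hm hpn hpn2
  have hC := gamma_ne hp hn2 hneven hn4 hm hpn hpn2
  have hF := fact_ne hp hn2 hm
  have hinv := inv_n_eq hp hn2 hm
  set α := (n : ZMod p)⁻¹ with hαdef
  set β := (2 * (n : ZMod p) - 3) / (2 * (n : ZMod p)) with hβdef
  set γ := (5 : ZMod p) / (2 * (n : ZMod p)) with hγdef
  have h2n : (2 * (n : ZMod p)) ≠ 0 := mul_ne_zero h20 hn0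
  have hαm : α + (m : ZMod p) = 0 := by rw [hinv]; ring
  have hmval : (m : ZMod p) = -α := by linear_combination hαm
  have hβm : β + (m : ZMod p) = 1 - γ := by
    rw [hmval, hαdef, hβdef, hγdef]
    field_simp
    ring
  have hγm : γ + (m : ZMod p) = 1 - β := by
    rw [hmval, hαdef, hβdef, hγdef]
    field_simp
    ring
  have hAk : ∀ k, k ≤ m → rrg α k ≠ 0 := fun k hk =>
    rrg_ne_zero (fun j hj => hA j (by omega))
  have hBk : ∀ k, k ≤ m → rrg β k ≠ 0 := fun k hk =>
    rrg_ne_zero (fun j hj => hB j (by omega))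
  have hCk : ∀ k, k ≤ m → rrg γ k ≠ 0 := fun k hk =>
    rrg_ne_zero (fun j hj => hC j (by omega))
  have hs2 : ∀ k : ℕ, ((-1 : ZMod p) ^ k) * ((-1 : ZMod p) ^ k) = 1 := fun k => by
    rw [← pow_add]; exact Even.neg_one_pow ⟨k, rfl⟩
  have heA : ∀ k, k ≤ m →
      (-1 : ZMod p) ^ k * rrg α m = rrg α (m - k) * (k.factorial : ZMod p) := by
    intro k hk
    have h1 : rrg α m = rrg α (m - k) * ((-1) ^ k * (k.factorial : ZMod p)) := by
      rw [rrg_rev α hk]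
      congr 1
      calc ∏ j ∈ Finset.range k, (α + (m : ZMod p) - 1 - (j : ZMod p))
          = ∏ j ∈ Finset.range k, (-((1 : ZMod p) + (j : ZMod p))) :=
            Finset.prod_congr rfl fun j _ => by linear_combination hαm
        _ = (-1) ^ k * ∏ j ∈ Finset.range k, ((1 : ZMod p) + (j : ZMod p)) :=
            prod_neg_eq _ k
        _ = (-1) ^ k * (k.factorial : ZMod p) := by rw [prod_one_add_cast]
    linear_combination ((-1 : ZMod p) ^ k) * h1
      + (rrg α (m - k) * (k.factorial : ZMod p)) * hs2 k
  have heB : ∀ k, k ≤ m →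
      (-1 : ZMod p) ^ k * rrg β m = rrg β (m - k) * rrg γ k := by
    intro k hk
    have h1 : rrg β m = rrg β (m - k) * ((-1) ^ k * rrg γ k) := by
      rw [rrg_rev β hk]
      congr 1
      calc ∏ j ∈ Finset.range k, (β + (m : ZMod p) - 1 - (j : ZMod p))
          = ∏ j ∈ Finset.range k, (-(γ + (j : ZMod p))) :=
            Finset.prod_congr rfl fun j _ => by linear_combination hβm
        _ = (-1) ^ k * ∏ j ∈ Finset.range k, (γ + (j : ZMod p)) := prod_neg_eq _ k
        _ = (-1) ^ k * rrg γ k := rfl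
    linear_combination ((-1 : ZMod p) ^ k) * h1 + (rrg β (m - k) * rrg γ k) * hs2 k
  have heC : ∀ k, k ≤ m →
      (-1 : ZMod p) ^ k * rrg γ m = rrg γ (m - k) * rrg β k := by
    intro k hk
    have h1 : rrg γ m = rrg γ (m - k) * ((-1) ^ k * rrg β k) := by
      rw [rrg_rev γ hk]
      congr 1
      calc ∏ j ∈ Finset.range k, (γ + (m : ZMod p) - 1 - (j : ZMod p))
          = ∏ j ∈ Finset.range k, (-(β + (j : ZMod p))) :=
            Finset.prod_congr rfl fun j _ => by linear_combination hγm
        _ = (-1) ^ k * ∏ j ∈ Finset.range k, (β + (j : ZMod p)) := prod_neg_eq _ k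
        _ = (-1) ^ k * rrg β k := rfl
    linear_combination ((-1 : ZMod p) ^ k) * h1 + (rrg γ (m - k) * rrg β k) * hs2 k
  have heK : ∀ k, k ≤ m →
      (-1 : ZMod p) ^ k * (m.factorial : ZMod p)
        = ((m - k).factorial : ZMod p) * rrg α k := by
    intro k hk
    have h1 : ((m.factorial : ℕ) : ZMod p)
        = (((m - k).factorial : ℕ) : ZMod p) * ∏ i ∈ Finset.range k, ((m - i : ℕ) : ZMod p) := by
      rw [← Nat.cast_prod, ← Nat.cast_mul, ← Nat.descFactorial_eq_prod_range,
        Nat.factorial_mul_descFactorial hk]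
    have h2 : ∏ i ∈ Finset.range k, ((m - i : ℕ) : ZMod p) = (-1) ^ k * rrg α k := by
      calc ∏ i ∈ Finset.range k, ((m - i : ℕ) : ZMod p)
          = ∏ i ∈ Finset.range k, (-(α + (i : ZMod p))) := by
            refine Finset.prod_congr rfl fun i hi => ?_
            have hi' : i < k := Finset.mem_range.1 hi
            rw [Nat.cast_sub (by omega : i ≤ m)]
            linear_combination hαm
        _ = (-1) ^ k * ∏ i ∈ Finset.range k, (α + (i : ZMod p)) := prod_neg_eq _ k
        _ = (-1) ^ k * rrg α k := rfl
    rw [h2] at h1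
    linear_combination ((-1 : ZMod p) ^ k) * h1
      + (((m - k).factorial : ZMod p) * rrg α k) * hs2 k
  have e5 : rrg α m = -(m.factorial : ZMod p) := by
    have h := heA m le_rfl
    simp only [Nat.sub_self, rrg_zero, one_mul, Odd.neg_one_pow hmodd] at h
    linear_combination -h
  have e6 : rrg β m = -(rrg γ m) := by
    have h := heB m le_rfl
    simp only [Nat.sub_self, rrg_zero, one_mul, Odd.neg_one_pow hmodd] at h
    linear_combination -h
  have hkey : ∀ k, k ≤ m →
      rrg α (m - k) ^ 4 * rrg β (m - k) /
          (rrg γ (m - k) * ((m - k).factorial : ZMod p) ^ 4)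
        = -(rrg α k ^ 4 * rrg β k / (rrg γ k * (k.factorial : ZMod p) ^ 4)) := by
    intro k hk
    have hs : ((-1 : ZMod p) ^ k) ≠ 0 := pow_ne_zero _ (neg_ne_zero.2 one_ne_zero)
    have hKk := hF k hk
    have hKm := hF m le_rfl
    have hAk' := hAk k hk
    have hBk' := hBk k hk
    have hCk' := hCk k hk
    have hCm := hCk m le_rfl
    have dA : rrg α (m - k) = (-1) ^ k * rrg α m / (k.factorial : ZMod p) := by
      rw [eq_div_iff hKk]; linear_combination -(heA k hk)
    have dB : rrg β (m - k) = (-1) ^ k * rrg β m / rrg γ k := by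
      rw [eq_div_iff hCk']; linear_combination -(heB k hk)
    have dC : rrg γ (m - k) = (-1) ^ k * rrg γ m / rrg β k := by
      rw [eq_div_iff hBk']; linear_combination -(heC k hk)
    have dK : ((m - k).factorial : ZMod p) = (-1) ^ k * (m.factorial : ZMod p) / rrg α k := by
      rw [eq_div_iff hAk']; linear_combination -(heK k hk)
    rw [dA, dB, dC, dK, e5, e6]
    field_simp
  have hrefl := Finset.sum_range_reflect
    (fun k => rrg α k ^ 4 * rrg β k / (rrg γ k * (k.factorial : ZMod p) ^ 4)) (m + 1)
  simp only [Nat.add_sub_cancel] at hrefl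
  have h2 : ∑ j ∈ Finset.range (m + 1),
      rrg α (m - j) ^ 4 * rrg β (m - j) /
        (rrg γ (m - j) * ((m - j).factorial : ZMod p) ^ 4)
      = -(∑ j ∈ Finset.range (m + 1),
          rrg α j ^ 4 * rrg β j / (rrg γ j * (j.factorial : ZMod p) ^ 4)) := by
    rw [← Finset.sum_neg_distrib]
    exact Finset.sum_congr rfl fun j hj => hkey j (by
      have := Finset.mem_range.1 hj; omega)
  have hSS : ∑ j ∈ Finset.range (m + 1),
      rrg α j ^ 4 * rrg β j / (rrg γ j * (j.factorial : ZMod p) ^ 4)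
      = -(∑ j ∈ Finset.range (m + 1),
          rrg α j ^ 4 * rrg β j / (rrg γ j * (j.factorial : ZMod p) ^ 4)) := by
    exact hrefl.symm.trans h2
  have h2S : (2 : ZMod p) * ∑ j ∈ Finset.range (m + 1),
      rrg α j ^ 4 * rrg β j / (rrg γ j * (j.factorial : ZMod p) ^ 4) = 0 := by
    linear_combination hSS
  rcases mul_eq_zero.1 h2S with h | h
  · exact absurd h h20
  · exact h

end zmodside

section padic
variable {p : ℕ} [hpf : Fact p.Prime]

lemma isUnit_of_toZMod_ne_zero {x : ℤ_[p]} (h : PadicInt.toZMod x ≠ 0) : IsUnit x := by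
  rw [PadicInt.isUnit_iff]
  by_contra hne
  have hlt : ‖x‖ < 1 := lt_of_le_of_ne (PadicInt.norm_le_one x) hne
  have hdvd : (p : ℤ_[p]) ∣ x := (PadicInt.norm_lt_one_iff_dvd x).1 hlt
  apply h
  have hmem : x ∈ RingHom.ker (PadicInt.toZMod (p := p)) := by
    rw [PadicInt.ker_toZMod, PadicInt.maximalIdeal_eq_span_p]
    exact Ideal.mem_span_singleton.2 hdvd
  exact hmem

lemma coe_ringInverse {x : ℤ_[p]} (h : IsUnit x) :
    ((Ring.inverse x : ℤ_[p]) : ℚ_[p]) = ((x : ℚ_[p]))⁻¹ := by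
  have h1 : x * Ring.inverse x = 1 := Ring.mul_inverse_cancel x h
  have h2 : (x : ℚ_[p]) * ((Ring.inverse x : ℤ_[p]) : ℚ_[p]) = 1 := by
    exact_mod_cast congrArg (fun z : ℤ_[p] => (z : ℚ_[p])) h1
  exact eq_inv_of_mul_eq_one_right h2

lemma toZMod_ringInverse {x : ℤ_[p]} (h : IsUnit x) :
    PadicInt.toZMod (Ring.inverse x) = (PadicInt.toZMod x)⁻¹ := by
  have h1 : x * Ring.inverse x = 1 := Ring.mul_inverse_cancel x h
  have h2 : PadicInt.toZMod x * PadicInt.toZMod (Ring.inverse x) = 1 := by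
    rw [← map_mul, h1, map_one]
  exact eq_inv_of_mul_eq_one_right h2

lemma coe_rrg (a : ℤ_[p]) (k : ℕ) :
    ((rrg a k : ℤ_[p]) : ℚ_[p]) = rrg ((a : ℤ_[p]) : ℚ_[p]) k :=
  map_rrg PadicInt.Coe.ringHom a k

lemma coe_padic_sum (s : Finset ℕ) (f : ℕ → ℤ_[p]) :
    ((∑ i ∈ s, f i : ℤ_[p]) : ℚ_[p]) = ∑ i ∈ s, ((f i : ℤ_[p]) : ℚ_[p]) :=
  map_sum PadicInt.Coe.ringHom f s

end padic


noncomputable def ttz (p n : ℕ) [Fact p.Prime] (k : ℕ) : ℤ_[p] :=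
  rrg (Ring.inverse ((n : ℤ_[p]))) k ^ 4 *
    rrg ((2 * (n : ℤ_[p]) - 3) * Ring.inverse (2 * (n : ℤ_[p]))) k *
    Ring.inverse (rrg (5 * Ring.inverse (2 * (n : ℤ_[p]))) k * (k.factorial : ℤ_[p]) ^ 4)

/-- Rising factorial (Pochhammer symbol) `(a)_k = a(a+1)⋯(a+k-1)` in `ℚ_p`. -/
noncomputable def rf {p : ℕ} [Fact p.Prime] (a : ℚ_[p]) (k : ℕ) : ℚ_[p] :=
  ∏ j ∈ Finset.range k, (a + (j : ℚ_[p]))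

/-- Let `n` be even with `n ≥ 2`, `n ≠ 4`, and `p ≥ 7` prime with `p ≡ 1 (mod n)`
but `p ≢ 1 (mod 2n)`. Then
`∑_{k=0}^{(p-1)/n} (1/n)_k⁴ ((2n-3)/(2n))_k / ((5/(2n))_k (k!)⁴) ≡ 0 (mod p)`
in `ℤ_p`, i.e. the sum lies in `pℤ_p`. -/
theorem stmt9 (n p : ℕ) [Fact p.Prime] (hn2 : 2 ≤ n) (hneven : Even n) (hn4 : n ≠ 4)
    (hp : 7 ≤ p) (hpn : p % n = 1) (hpn2 : ¬ p % (2 * n) = 1) :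
    ∃ c : ℤ_[p],
      (∑ k ∈ Finset.range ((p - 1) / n + 1),
        rf (1 / (n : ℚ_[p])) k ^ 4 *
          rf ((2 * (n : ℚ_[p]) - 3) / (2 * (n : ℚ_[p]))) k /
          (rf (5 / (2 * (n : ℚ_[p]))) k * (k.factorial : ℚ_[p]) ^ 4))
      = (p : ℚ_[p]) * (c : ℚ_[p]) := by
  set m := (p - 1) / n with hmdef
  have h0 := Nat.div_add_mod p n
  rw [hpn] at h0
  have hpd : p - 1 = n * (p / n) := Nat.sub_eq_of_eq_add h0.symm
  have hdvd : n ∣ p - 1 := ⟨p / n, hpd⟩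
  have hm : n * m = p - 1 := Nat.mul_div_cancel' hdvd
  obtain ⟨hn0, h20, hmp, hm1⟩ := basic_facts (p := p) hp hn2 hm
  have hmodd : Odd m := by
    by_contra h
    obtain ⟨t, ht⟩ := Nat.not_odd_iff_even.1 h
    apply hpn2
    have h1 : n * (t + t) = p - 1 := by rw [← ht]; exact hm
    have h2 : 2 * n * t = p - 1 := by rw [← h1]; ring
    have h3 : p = 2 * n * t + 1 :=
      (Nat.sub_eq_iff_eq_add (show 1 ≤ p by omega)).1 h2.symm
    rw [h3, add_comm, Nat.add_mul_mod_self_left]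
    exact Nat.mod_eq_of_lt (by omega)
  -- units and toZMod values
  have hUn : IsUnit ((n : ℤ_[p])) := isUnit_of_toZMod_ne_zero (by rw [map_natCast]; exact hn0)
  have hφ2n : PadicInt.toZMod (2 * (n : ℤ_[p])) = 2 * (n : ZMod p) := by
    rw [map_mul, map_natCast, map_ofNat]
  have h2nz : (2 * (n : ZMod p)) ≠ 0 := mul_ne_zero h20 hn0
  have hU2n : IsUnit (2 * (n : ℤ_[p])) := isUnit_of_toZMod_ne_zero (by rw [hφ2n]; exact h2nz)
  have hφA : PadicInt.toZMod (Ring.inverse ((n : ℤ_[p]))) = (n : ZMod p)⁻¹ := by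
    rw [toZMod_ringInverse hUn, map_natCast]
  have hφB : PadicInt.toZMod ((2 * (n : ℤ_[p]) - 3) * Ring.inverse (2 * (n : ℤ_[p])))
      = (2 * (n : ZMod p) - 3) / (2 * (n : ZMod p)) := by
    rw [map_mul, toZMod_ringInverse hU2n, hφ2n, map_sub, hφ2n, map_ofNat, div_eq_mul_inv]
  have hφC : PadicInt.toZMod (5 * Ring.inverse (2 * (n : ℤ_[p])))
      = (5 : ZMod p) / (2 * (n : ZMod p)) := by
    rw [map_mul, toZMod_ringInverse hU2n, hφ2n, map_ofNat, div_eq_mul_inv]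
  have hγne := gamma_ne hp hn2 hneven hn4 hm hpn hpn2
  have hfne := fact_ne hp hn2 hm
  have hφD : ∀ k : ℕ,
      PadicInt.toZMod (rrg (5 * Ring.inverse (2 * (n : ℤ_[p]))) k * (k.factorial : ℤ_[p]) ^ 4)
      = rrg ((5 : ZMod p) / (2 * (n : ZMod p))) k * (k.factorial : ZMod p) ^ 4 := by
    intro k
    rw [map_mul, map_pow, map_natCast, map_rrg, hφC]
  have hDunit : ∀ k, k ≤ m →
      IsUnit (rrg (5 * Ring.inverse (2 * (n : ℤ_[p]))) k * (k.factorial : ℤ_[p]) ^ 4) := by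
    intro k hk
    apply isUnit_of_toZMod_ne_zero
    rw [hφD]
    exact mul_ne_zero (rrg_ne_zero fun j hj => hγne j (by omega))
      (pow_ne_zero _ (hfne k hk))
  have hφt : ∀ k, k ≤ m → PadicInt.toZMod (ttz p n k)
      = rrg ((n : ZMod p)⁻¹) k ^ 4 * rrg ((2 * (n : ZMod p) - 3) / (2 * (n : ZMod p))) k /
          (rrg ((5 : ZMod p) / (2 * (n : ZMod p))) k * (k.factorial : ZMod p) ^ 4) := by
    intro k hk
    simp only [ttz]
    rw [map_mul, map_mul, map_pow, map_rrg, map_rrg, hφA, hφB,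
      toZMod_ringInverse (hDunit k hk), hφD]
    exact (div_eq_mul_inv _ _).symm
  have hterm : ∀ k ∈ Finset.range (m + 1),
      rf (1 / (n : ℚ_[p])) k ^ 4 * rf ((2 * (n : ℚ_[p]) - 3) / (2 * (n : ℚ_[p]))) k /
        (rf (5 / (2 * (n : ℚ_[p]))) k * (k.factorial : ℚ_[p]) ^ 4)
      = ((ttz p n k : ℤ_[p]) : ℚ_[p]) := by
    intro k hk'
    have hk : k ≤ m := by have := Finset.mem_range.1 hk'; omega
    have hD := hDunit k hk
    have hcA : ((rrg (Ring.inverse ((n : ℤ_[p]))) k : ℤ_[p]) : ℚ_[p])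
        = rf (1 / (n : ℚ_[p])) k := by
      rw [coe_rrg, coe_ringInverse hUn,
        show (((n : ℤ_[p]) : ℚ_[p])) = ((n : ℚ_[p])) by push_cast; ring, one_div]
      rfl
    have hcB : ((rrg ((2 * (n : ℤ_[p]) - 3) * Ring.inverse (2 * (n : ℤ_[p]))) k : ℤ_[p]) : ℚ_[p])
        = rf ((2 * (n : ℚ_[p]) - 3) / (2 * (n : ℚ_[p]))) k := by
      rw [coe_rrg]
      have harg : (((2 * (n : ℤ_[p]) - 3) * Ring.inverse (2 * (n : ℤ_[p])) : ℤ_[p]) : ℚ_[p])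
          = (2 * (n : ℚ_[p]) - 3) / (2 * (n : ℚ_[p])) := by
        push_cast [coe_ringInverse hU2n]
        rw [div_eq_mul_inv]
        norm_cast
      rw [harg]
      rfl
    have hcD : ((rrg (5 * Ring.inverse (2 * (n : ℤ_[p]))) k * (k.factorial : ℤ_[p]) ^ 4 : ℤ_[p])
          : ℚ_[p])
        = rf (5 / (2 * (n : ℚ_[p]))) k * (k.factorial : ℚ_[p]) ^ 4 := by
      have harg : ((5 * Ring.inverse (2 * (n : ℤ_[p])) : ℤ_[p]) : ℚ_[p])
          = 5 / (2 * (n : ℚ_[p])) := by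
        push_cast [coe_ringInverse hU2n]
        rw [div_eq_mul_inv]
        norm_cast
      push_cast [coe_rrg, harg]
      rfl
    have hcoe : ((ttz p n k : ℤ_[p]) : ℚ_[p])
        = ((rrg (Ring.inverse ((n : ℤ_[p]))) k : ℤ_[p]) : ℚ_[p]) ^ 4
          * ((rrg ((2 * (n : ℤ_[p]) - 3) * Ring.inverse (2 * (n : ℤ_[p]))) k : ℤ_[p]) : ℚ_[p])
          / ((rrg (5 * Ring.inverse (2 * (n : ℤ_[p]))) k * (k.factorial : ℤ_[p]) ^ 4 : ℤ_[p])
              : ℚ_[p]) := by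
      have hun : ttz p n k = rrg (Ring.inverse ((n : ℤ_[p]))) k ^ 4 *
          rrg ((2 * (n : ℤ_[p]) - 3) * Ring.inverse (2 * (n : ℤ_[p]))) k *
          Ring.inverse (rrg (5 * Ring.inverse (2 * (n : ℤ_[p]))) k *
            (k.factorial : ℤ_[p]) ^ 4) := rfl
      rw [hun, PadicInt.coe_mul, PadicInt.coe_mul, PadicInt.coe_pow, coe_ringInverse hD,
        div_eq_mul_inv]
    rw [hcoe, hcA, hcB, hcD]
  rw [Finset.sum_congr rfl hterm, ← coe_padic_sum]
  have hker : PadicInt.toZMod (∑ k ∈ Finset.range (m + 1), ttz p n k) = 0 := by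
    rw [map_sum,
      Finset.sum_congr rfl (fun k hk => hφt k (Nat.lt_succ_iff.mp (Finset.mem_range.1 hk)))]
    exact zmod_sum hp hn2 hneven hn4 hm hpn hpn2 hmodd
  have hdv : (p : ℤ_[p]) ∣ ∑ k ∈ Finset.range (m + 1), ttz p n k := by
    have hmem : (∑ k ∈ Finset.range (m + 1), ttz p n k)
        ∈ RingHom.ker (PadicInt.toZMod (p := p)) := hker
    rwa [PadicInt.ker_toZMod, PadicInt.maximalIdeal_eq_span_p,
      Ideal.mem_span_singleton] at hmem
  obtain ⟨c, hc⟩ := hdv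
  refine ⟨c, ?_⟩
  rw [hc]
  push_cast
  ring
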